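/- The ℂ-span of the image of the diagonal action of the symmetric group S_n on (ℂ^n)^{⊗k} (via the permutation representation on ℂ^n) has centralizer in End((ℂ^n)^{⊗k}) of dimension equal to the number of set partitions of {1,...,2k} into at most n blocks. -/

import Mathlib

open scoped TensorProduct
set_option synthInstance.maxHeartbeats 1000000
set_option maxHeartbeats 1000000

/-- The `k`-fold tensor power `(ℂ^n)^{⊗k}`. -/
def TPow (n k : ℕ) : Type := ⨂[ℂ] (_ : Fin k), (Fin n → ℂ)

noncomputable instance (n k : ℕ) : AddCommGroup (TPow n k) :=
  inferInstanceAs (AddCommGroup (⨂[ℂ] (_ : Fin k), (Fin n → ℂ)))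

noncomputable instance (n k : ℕ) : Module ℂ (TPow n k) :=
  inferInstanceAs (Module ℂ (⨂[ℂ] (_ : Fin k), (Fin n → ℂ)))

/-- The diagonal action of `σ ∈ S_n` on `(ℂ^n)^{⊗k}`, via the permutation representation
of `S_n` on `ℂ^n = Fin n → ℂ`. -/
noncomputable def diagPermAction (n k : ℕ) (σ : Equiv.Perm (Fin n)) :
    Module.End ℂ (TPow n k) :=
  PiTensorProduct.map fun _ => LinearMap.funLeft ℂ ℂ ⇑σ⁻¹

namespace SchurWeylAux

/-- basis vectors of the tensor power -/
noncomputable def tpv (n k : ℕ) (f : Fin k → Fin n) : TPow n k :=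
  PiTensorProduct.tprod ℂ (fun i => Pi.single (f i) (1 : ℂ))

/-- dual evaluation functional -/
noncomputable def evalML (n k : ℕ) (g : Fin k → Fin n) : TPow n k →ₗ[ℂ] ℂ :=
  PiTensorProduct.lift ((MultilinearMap.mkPiAlgebra ℂ (Fin k) ℂ).compLinearMap
    (fun i => LinearMap.proj (g i)))

lemma evalML_tpv (n k : ℕ) (f g : Fin k → Fin n) :
    evalML n k g (tpv n k f) = if f = g then 1 else 0 := by
  show (PiTensorProduct.lift _) (PiTensorProduct.tprod ℂ _) = _
  rw [PiTensorProduct.lift.tprod]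
  rw [MultilinearMap.compLinearMap_apply, MultilinearMap.mkPiAlgebra_apply]
  by_cases h : f = g
  · subst h
    rw [if_pos rfl]
    refine Finset.prod_eq_one ?_
    intro i _
    show (Pi.single (f i) (1 : ℂ) : Fin n → ℂ) (f i) = 1
    rw [Pi.single_apply, if_pos rfl]
  · obtain ⟨i, hi⟩ := Function.ne_iff.1 h
    rw [if_neg h]
    refine Finset.prod_eq_zero (Finset.mem_univ i) ?_
    show (Pi.single (f i) (1 : ℂ) : Fin n → ℂ) (g i) = 0
    rw [Pi.single_apply, if_neg (fun hgi => hi hgi.symm)]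

lemma tpv_linearIndependent (n k : ℕ) : LinearIndependent ℂ (tpv n k) := by
  rw [Fintype.linearIndependent_iff]
  intro c hc g
  have := congrArg (evalML n k g) hc
  rw [map_sum, map_zero] at this
  simp only [map_smul, evalML_tpv, smul_eq_mul, mul_ite, mul_one, mul_zero] at this
  rwa [Finset.sum_ite_eq' Finset.univ g c, if_pos (Finset.mem_univ g)] at this

lemma tpv_span (n k : ℕ) :
    ⊤ ≤ Submodule.span ℂ (Set.range (tpv n k)) := by
  intro x _
  refine PiTensorProduct.induction_on x ?_ ?_
  · intro r m
    refine Submodule.smul_mem _ _ ?_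
    have hm : ∀ i, m i = ∑ j, (m i j) • (Pi.single j (1 : ℂ) : Fin n → ℂ) := by
      intro i
      have h4 : ∀ j, (m i j) • (Pi.single j (1 : ℂ) : Fin n → ℂ)
          = Pi.single j (m i j) := by
        intro j
        rw [← Pi.single_smul, smul_eq_mul, mul_one]
      simp_rw [h4, Finset.univ_sum_single]
    have h1 : PiTensorProduct.tprod ℂ m
        = PiTensorProduct.tprod ℂ (fun i => ∑ j, (m i j) • (Pi.single j (1 : ℂ) : Fin n → ℂ)) := by
      congr 1; funext i; exact hm i
    have h2 := (PiTensorProduct.tprod ℂ (s := fun _ : Fin k => Fin n → ℂ)).map_sum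
        (g := fun i j => (m i j) • (Pi.single j (1 : ℂ) : Fin n → ℂ))
    rw [h1, h2]
    refine Submodule.sum_mem _ ?_
    intro r _
    have h3 := (PiTensorProduct.tprod ℂ (s := fun _ : Fin k => Fin n → ℂ)).map_smul_univ
        (fun i => m i (r i)) (fun i => Pi.single (r i) (1 : ℂ))
    rw [h3]
    exact Submodule.smul_mem _ _ (Submodule.subset_span ⟨r, rfl⟩)
  · intro y z hy hz
    exact Submodule.add_mem _ hy hz

/-- The basis of `TPow n k` indexed by `Fin k → Fin n`. -/
noncomputable def basisT (n k : ℕ) : Module.Basis (Fin k → Fin n) ℂ (TPow n k) :=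
  Module.Basis.mk (tpv_linearIndependent n k) (tpv_span n k)

lemma basisT_apply (n k : ℕ) (f : Fin k → Fin n) : basisT n k f = tpv n k f :=
  Module.Basis.mk_apply _ _ _

lemma diag_tpv (n k : ℕ) (σ : Equiv.Perm (Fin n)) (f : Fin k → Fin n) :
    diagPermAction n k σ (tpv n k f) = tpv n k (σ • f) := by
  show (PiTensorProduct.map _) (PiTensorProduct.tprod ℂ _) = _
  rw [PiTensorProduct.map_tprod]
  unfold tpv
  congr 1
  funext i
  funext x
  rw [LinearMap.funLeft_apply]
  simp only [Pi.single_apply]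
  have : σ⁻¹ x = f i ↔ x = σ (f i) := by
    constructor
    · intro h; rw [← h]; simp
    · intro h; rw [h]; simp
  rw [if_congr this rfl rfl]
  rfl

lemma diag_basisT (n k : ℕ) (σ : Equiv.Perm (Fin n)) (f : Fin k → Fin n) :
    diagPermAction n k σ (basisT n k f) = basisT n k (σ • f) := by
  rw [basisT_apply, basisT_apply, diag_tpv]


variable (n k : ℕ)

local notation "ι" => (Fin k → Fin n)

/-- quotient of `ι × ι` by the diagonal `S_n`-action -/
abbrev Q (n k : ℕ) :=
  Quotient (MulAction.orbitRel (Equiv.Perm (Fin n)) ((Fin k → Fin n) × (Fin k → Fin n)))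

lemma mem_cent_iff (T : Module.End ℂ (TPow n k)) :
    T ∈ Subalgebra.centralizer ℂ
        ((Submodule.span ℂ (Set.range (diagPermAction n k)) :
          Submodule ℂ (Module.End ℂ (TPow n k))) : Set (Module.End ℂ (TPow n k))) ↔
      ∀ σ, diagPermAction n k σ * T = T * diagPermAction n k σ := by
  rw [Subalgebra.mem_centralizer_iff]
  constructor
  · intro h σ
    exact h _ (Submodule.subset_span (Set.mem_range_self σ))
  · intro h a ha
    induction ha using Submodule.span_induction with
    | mem x hx => obtain ⟨σ, rfl⟩ := hx; exact h σ
    | zero => rw [zero_mul, mul_zero]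
    | add x y _ _ hx hy => rw [add_mul, mul_add, hx, hy]
    | smul c x _ hx => rw [smul_mul_assoc, mul_smul_comm, hx]

lemma repr_diag (σ : Equiv.Perm (Fin n)) (x : TPow n k) (p : Fin k → Fin n) :
    (basisT n k).repr (diagPermAction n k σ x) (σ • p) = (basisT n k).repr x p := by
  conv_lhs => rw [← (basisT n k).sum_repr x]
  rw [map_sum, map_sum]
  simp only [map_smul, diag_basisT, Module.Basis.repr_self, Finsupp.smul_single, smul_eq_mul, mul_one]
  rw [Finsupp.finset_sum_apply]
  simp only [Finsupp.single_apply]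
  rw [Finset.sum_eq_single p]
  · rw [if_pos rfl]
  · intro r _ hr
    rw [if_neg (fun hc => hr (smul_left_cancel σ hc))]
  · intro hp; exact absurd (Finset.mem_univ p) hp

/-- the candidate centralizer element attached to an invariant function -/
noncomputable def Phi (h : Q n k → ℂ) : Module.End ℂ (TPow n k) :=
  Matrix.toLin (basisT n k) (basisT n k) (Matrix.of fun p q => h ⟦(p, q)⟧)

lemma q_smul (σ : Equiv.Perm (Fin n)) (p q : Fin k → Fin n) :
    (⟦(σ • p, σ • q)⟧ : Q n k) = ⟦(p, q)⟧ :=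
  Quotient.sound ⟨σ, rfl⟩

lemma Phi_mem (h : Q n k → ℂ) :
    ∀ σ, diagPermAction n k σ * Phi n k h = Phi n k h * diagPermAction n k σ := by
  intro σ
  refine Module.Basis.ext (basisT n k) ?_
  intro q
  show diagPermAction n k σ (Phi n k h (basisT n k q))
      = Phi n k h (diagPermAction n k σ (basisT n k q))
  rw [diag_basisT]
  unfold Phi
  rw [Matrix.toLin_self, Matrix.toLin_self, map_sum]
  simp only [map_smul, diag_basisT, Matrix.of_apply]
  refine Fintype.sum_equiv (MulAction.toPerm σ) _ _ ?_
  intro p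
  show h ⟦(p, q)⟧ • basisT n k (σ • p) = h ⟦(σ • p, σ • q)⟧ • basisT n k (σ • p)
  rw [q_smul]

lemma Phi_surj (T : Module.End ℂ (TPow n k))
    (hT : ∀ σ, diagPermAction n k σ * T = T * diagPermAction n k σ) :
    ∃ h : Q n k → ℂ, Phi n k h = T := by
  set b := basisT n k
  set M := LinearMap.toMatrix b b T with hM
  have hinv : ∀ (σ : Equiv.Perm (Fin n)) (p q : Fin k → Fin n),
      M (σ • p) (σ • q) = M p q := by
    intro σ p q
    have h1 : diagPermAction n k σ (T (b q)) = T (b (σ • q)) := by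
      have h0 := congrArg (fun (S : Module.End ℂ (TPow n k)) => S (b q)) (hT σ)
      simp only [Module.End.mul_apply] at h0
      rw [h0, diag_basisT]
    calc M (σ • p) (σ • q) = b.repr (T (b (σ • q))) (σ • p) := by
          rw [hM, LinearMap.toMatrix_apply]
      _ = b.repr (diagPermAction n k σ (T (b q))) (σ • p) := by rw [h1]
      _ = b.repr (T (b q)) p := repr_diag n k σ _ p
      _ = M p q := by rw [hM, LinearMap.toMatrix_apply]
  have hwell : ∀ (pq pq' : (Fin k → Fin n) × (Fin k → Fin n)),
      (MulAction.orbitRel (Equiv.Perm (Fin n)) ((Fin k → Fin n) × (Fin k → Fin n))).r pq pq' →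
      M pq.1 pq.2 = M pq'.1 pq'.2 := by
    rintro ⟨p, q⟩ ⟨p', q'⟩ hrel
    obtain ⟨σ, hσ⟩ := hrel
    have h1 : σ • p' = p := congrArg Prod.fst hσ
    have h2 : σ • q' = q := congrArg Prod.snd hσ
    rw [← h1, ← h2, hinv]
  refine ⟨Quotient.lift (fun pq : (Fin k → Fin n) × (Fin k → Fin n) => M pq.1 pq.2) hwell, ?_⟩
  unfold Phi
  have hmat : (Matrix.of fun p q : Fin k → Fin n =>
      Quotient.lift (fun pq : (Fin k → Fin n) × (Fin k → Fin n) => M pq.1 pq.2) hwell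
        (⟦(p, q)⟧ : Q n k)) = M := rfl
  rw [hmat, hM]
  exact Matrix.toLin_toMatrix b b T


lemma Phi_inj : Function.Injective (Phi n k) := by
  intro h h' heq
  have hmat := congrArg (LinearMap.toMatrix (basisT n k) (basisT n k)) heq
  unfold Phi at hmat
  rw [LinearMap.toMatrix_toLin, LinearMap.toMatrix_toLin] at hmat
  funext x
  induction x using Quotient.ind with
  | _ pq =>
    have := congrFun (congrFun hmat pq.1) pq.2
    simpa using this

lemma Phi_add (h h' : Q n k → ℂ) : Phi n k (h + h') = Phi n k h + Phi n k h' := by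
  unfold Phi
  rw [← map_add]
  rfl

lemma Phi_smul (c : ℂ) (h : Q n k → ℂ) : Phi n k (c • h) = c • Phi n k h := by
  unfold Phi
  rw [← map_smul]
  rfl

/-- The linear equivalence between invariant functions and the centralizer. -/
noncomputable def centEquiv :
    (Q n k → ℂ) ≃ₗ[ℂ] (Subalgebra.centralizer ℂ
        ((Submodule.span ℂ (Set.range (diagPermAction n k)) :
          Submodule ℂ (Module.End ℂ (TPow n k))) : Set (Module.End ℂ (TPow n k)))) := by
  refine LinearEquiv.ofBijective
    { toFun := fun h => ⟨Phi n k h, (mem_cent_iff n k _).2 (Phi_mem n k h)⟩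
      map_add' := fun h h' => Subtype.ext (Phi_add n k h h')
      map_smul' := fun c h => Subtype.ext (Phi_smul n k c h) } ⟨?_, ?_⟩
  · intro h h' heq
    exact Phi_inj n k (congrArg Subtype.val heq)
  · rintro ⟨T, hT⟩
    obtain ⟨h, hh⟩ := Phi_surj n k T ((mem_cent_iff n k T).1 hT)
    exact ⟨h, Subtype.ext hh⟩

lemma finrank_cent :
    Module.finrank ℂ (Subalgebra.centralizer ℂ
        ((Submodule.span ℂ (Set.range (diagPermAction n k)) :
          Submodule ℂ (Module.End ℂ (TPow n k))) : Set (Module.End ℂ (TPow n k)))) =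
      Nat.card (Q n k) := by
  letI : DecidableEq (Q n k) := Classical.decEq _
  letI : Fintype (Q n k) :=
    Fintype.ofSurjective (Quotient.mk _) (Quotient.mk_surjective)
  rw [← (centEquiv n k).finrank_eq, Module.finrank_fintype_fun_eq_card,
    Nat.card_eq_fintype_card]


/-- extend a kernel-equality to a permutation of the codomain -/
lemma exists_perm_comp {α : Type*} {n : ℕ} (f g : α → Fin n)
    (hker : ∀ a b : α, f a = f b ↔ g a = g b) :
    ∃ σ : Equiv.Perm (Fin n), ∀ a, σ (f a) = g a := by
  classical
  let u : {x // x ∈ Set.range f} → α := fun x => x.2.choose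
  have hu : ∀ x, f (u x) = x.1 := fun x => x.2.choose_spec
  let v : {x // x ∈ Set.range g} → α := fun y => y.2.choose
  have hv : ∀ y, g (v y) = y.1 := fun y => y.2.choose_spec
  let e1 : {x // x ∈ Set.range f} ≃ {x // x ∈ Set.range g} :=
  { toFun := fun x => ⟨g (u x), Set.mem_range_self _⟩
    invFun := fun y => ⟨f (v y), Set.mem_range_self _⟩
    left_inv := by
      rintro x
      apply Subtype.ext
      show f (v ⟨g (u x), _⟩) = x.1
      rw [← hu x]
      exact (hker _ _).2 (hv ⟨g (u x), Set.mem_range_self _⟩)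
    right_inv := by
      rintro y
      apply Subtype.ext
      show g (u ⟨f (v y), _⟩) = y.1
      rw [← hv y]
      exact (hker _ _).1 (hu ⟨f (v y), Set.mem_range_self _⟩) }
  have hcard : Fintype.card {x // x ∈ Set.range f} = Fintype.card {x // x ∈ Set.range g} :=
    Fintype.card_congr e1
  let e2 : {x // x ∉ Set.range f} ≃ {x // x ∉ Set.range g} :=
    Fintype.equivOfCardEq (by
      rw [Fintype.card_subtype_compl, Fintype.card_subtype_compl, hcard])
  refine ⟨Equiv.subtypeCongr e1 e2, ?_⟩
  intro a
  have hp : f a ∈ Set.range f := Set.mem_range_self a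
  have : Equiv.subtypeCongr e1 e2 (f a) = (e1 ⟨f a, hp⟩ : Fin n) := by
    simp [Equiv.subtypeCongr, hp]
  rw [this]
  show g (u ⟨f a, hp⟩) = g a
  exact (hker _ _).1 (hu ⟨f a, hp⟩)

lemma kerCard (n m : ℕ) (f : Fin m → Fin n) :
    Nat.card (Quotient (Setoid.ker f)) ≤ n := by
  rw [Nat.card_congr (Setoid.quotientKerEquivRange f)]
  calc Nat.card (Set.range f) ≤ Nat.card (Fin n) :=
        Nat.card_le_card_of_injective (Subtype.val : Set.range f → Fin n) Subtype.val_injective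
    _ = n := by rw [Nat.card_eq_fintype_card, Fintype.card_fin]

/-- the key combinatorial bijection: orbits of the postcomposition action of `S_n`
on `Fin m → Fin n` biject with set partitions of `Fin m` into at most `n` blocks. -/
noncomputable def keyEquiv (n m : ℕ) :
    Quotient (MulAction.orbitRel (Equiv.Perm (Fin n)) (Fin m → Fin n)) ≃
      {R : Setoid (Fin m) // Nat.card (Quotient R) ≤ n} := by
  classical
  have hwell : ∀ (f g : Fin m → Fin n),
      (MulAction.orbitRel (Equiv.Perm (Fin n)) (Fin m → Fin n)) f g →
      (⟨Setoid.ker f, kerCard n m f⟩ : {R : Setoid (Fin m) // Nat.card (Quotient R) ≤ n})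
        = ⟨Setoid.ker g, kerCard n m g⟩ := by
    intro f g hrel
    obtain ⟨σ, rfl⟩ := MulAction.mem_orbit_iff.1 hrel
    refine Subtype.ext (Setoid.ext fun a b => ?_)
    rw [Setoid.ker_def, Setoid.ker_def]
    show σ (g a) = σ (g b) ↔ g a = g b
    exact σ.injective.eq_iff
  refine Equiv.ofBijective (Quotient.lift _ hwell) ⟨?_, ?_⟩
  · intro x y
    induction x using Quotient.ind with
    | _ f =>
    induction y using Quotient.ind with
    | _ g =>
    intro hfg
    have hker : Setoid.ker f = Setoid.ker g := congrArg Subtype.val hfg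
    have h2 : ∀ a b : Fin m, f a = f b ↔ g a = g b := by
      intro a b
      rw [← Setoid.ker_def (f := f), ← Setoid.ker_def (f := g), hker]
    obtain ⟨σ, hσ⟩ := exists_perm_comp f g h2
    refine Quotient.sound (MulAction.mem_orbit_iff.2 ⟨σ⁻¹, ?_⟩)
    funext a
    show σ⁻¹ (g a) = f a
    rw [← hσ a]
    exact σ.symm_apply_apply (f a)
  · rintro ⟨R, hR⟩
    letI : DecidableEq (Quotient R) := Classical.decEq _
    letI : Fintype (Quotient R) := Fintype.ofFinite _
    have hcard : Fintype.card (Quotient R) ≤ Fintype.card (Fin n) := by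
      rw [Fintype.card_fin, ← Nat.card_eq_fintype_card]
      exact hR
    obtain ⟨j⟩ := Function.Embedding.nonempty_of_card_le hcard
    refine ⟨⟦fun a => j ⟦a⟧⟧, Subtype.ext ?_⟩
    show Setoid.ker (fun a => j ⟦a⟧) = R
    refine Setoid.ext fun a b => ?_
    rw [Setoid.ker_def]
    constructor
    · intro h
      exact Quotient.eq.1 (j.injective h)
    · intro h
      exact congrArg j (Quotient.sound h)

/-- the equivariant identification `ι × ι ≃ (Fin (2k) → Fin n)` -/
def eIdx (n k : ℕ) : ((Fin k → Fin n) × (Fin k → Fin n)) ≃ (Fin (2 * k) → Fin n) :=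
  (Equiv.sumArrowEquivProdArrow (Fin k) (Fin k) (Fin n)).symm.trans
    (Equiv.arrowCongr (finSumFinEquiv.trans (finCongr (two_mul k).symm)) (Equiv.refl (Fin n)))

lemma eIdx_equivariant (σ : Equiv.Perm (Fin n)) (x : (Fin k → Fin n) × (Fin k → Fin n)) :
    eIdx n k (σ • x) = σ • (eIdx n k x) := by
  obtain ⟨p, q⟩ := x
  funext j
  show Sum.elim (σ • p) (σ • q) ((finSumFinEquiv.trans (finCongr (two_mul k).symm)).symm j)
      = σ (Sum.elim p q ((finSumFinEquiv.trans (finCongr (two_mul k).symm)).symm j))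
  cases (finSumFinEquiv.trans (finCongr (two_mul k).symm)).symm j with
  | inl i => rfl
  | inr i => rfl

/-- transport orbit quotients along the equivariant equivalence -/
noncomputable def quotEquiv :
    Q n k ≃ Quotient (MulAction.orbitRel (Equiv.Perm (Fin n)) (Fin (2 * k) → Fin n)) :=
  Quotient.congr (eIdx n k) (by
    intro a b
    constructor
    · intro hrel
      obtain ⟨σ, rfl⟩ := MulAction.mem_orbit_iff.1 hrel
      exact MulAction.mem_orbit_iff.2 ⟨σ, (eIdx_equivariant n k σ b).symm⟩
    · intro hrel
      obtain ⟨σ, hσ⟩ := MulAction.mem_orbit_iff.1 hrel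
      refine MulAction.mem_orbit_iff.2 ⟨σ, (eIdx n k).injective ?_⟩
      rw [eIdx_equivariant n k σ b]
      exact hσ)

end SchurWeylAux

theorem dim_centralizer_of_diagonal_symmetric_action (n k : ℕ) :
    Module.finrank ℂ (Subalgebra.centralizer ℂ
        ((Submodule.span ℂ (Set.range (diagPermAction n k)) :
          Submodule ℂ (Module.End ℂ (TPow n k))) : Set (Module.End ℂ (TPow n k)))) =
      Nat.card {R : Setoid (Fin (2 * k)) // Nat.card (Quotient R) ≤ n} := by
  rw [SchurWeylAux.finrank_cent]
  exact Nat.card_congr ((SchurWeylAux.quotEquiv n k).trans (SchurWeylAux.keyEquiv n (2 * k)))
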